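/- Integral Riedel–Sahoo theorem: If f : ℝ → ℝ is continuous on the closed interval [a,b] (with a < b), then there exists a point η ∈ (a,b) such that f(η) = (1/(η-a)) · ∫_a^η f(t) dt + ((η-a)/2) · (f(b)-f(a))/(b-a). -/

import Mathlib

open Set Filter Topology

/-- Auxiliary step: half of the Flett-type argument, in the case `ψ b < ψ a`. -/
private lemma riedel_sahoo_aux (ψ ψ' : ℝ → ℝ) (a b : ℝ) (hab : a < b)
    (hc : ContinuousOn ψ (Set.Icc a b))
    (hd : ∀ x ∈ Set.Ioc a b, HasDerivAt ψ (ψ' x) x)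
    (hkey : (b - a) * ψ' b = ψ a - ψ b) (hlt : ψ b < ψ a) :
    ∃ η ∈ Set.Ioo a b, ψ' η = 0 := by
  have hba : (0:ℝ) < b - a := by linarith
  have hψ'b : 0 < ψ' b := by nlinarith [hkey]
  -- find x1 ∈ (a,b) with ψ x1 < ψ b
  have hslope : Tendsto (slope ψ b) (𝓝[≠] b) (𝓝 (ψ' b)) :=
    hasDerivAt_iff_tendsto_slope.mp (hd b ⟨hab, le_refl b⟩)
  have hmono : 𝓝[Set.Ioo a b] b ≤ 𝓝[≠] b :=
    nhdsWithin_mono _ (fun x hx => ne_of_lt hx.2)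
  have hev : ∀ᶠ x in 𝓝[Set.Ioo a b] b, 0 < slope ψ b x :=
    (hslope.mono_left hmono) (eventually_gt_nhds hψ'b)
  have hne : (𝓝[Set.Ioo a b] b).NeBot := right_nhdsWithin_Ioo_neBot hab
  obtain ⟨x1, hx1s, hx1⟩ := (hev.and self_mem_nhdsWithin).exists
  have hψx1 : ψ x1 < ψ b := by
    rw [slope_def_field] at hx1s
    have hx1b : x1 - b < 0 := by linarith [hx1.2]
    rw [div_pos_iff] at hx1s
    rcases hx1s with ⟨h1, h2⟩ | ⟨h1, h2⟩ <;> linarith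
  -- IVT: find x2 ∈ (a, x1] with ψ x2 = ψ b
  have hsub1 : Set.Icc a x1 ⊆ Set.Icc a b := Set.Icc_subset_Icc le_rfl hx1.2.le
  have hIVT := intermediate_value_Icc' hx1.1.le (hc.mono hsub1)
  have hψb_mem : ψ b ∈ Set.Icc (ψ x1) (ψ a) := ⟨hψx1.le, hlt.le⟩
  obtain ⟨x2, hx2m, hx2⟩ := hIVT hψb_mem
  have hx2a : a < x2 := by
    rcases eq_or_lt_of_le hx2m.1 with h | h
    · exfalso; rw [← h] at hx2; linarith
    · exact h
  have hx2b : x2 < b := lt_of_le_of_lt hx2m.2 hx1.2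
  -- Rolle on [x2, b]
  obtain ⟨η, hη, hη0⟩ := exists_hasDerivAt_eq_zero hx2b
    (hc.mono (Set.Icc_subset_Icc hx2a.le le_rfl)) hx2
    (fun x hx => hd x ⟨lt_trans hx2a hx.1, hx.2.le⟩)
  exact ⟨η, ⟨lt_trans hx2a hη.1, hη.2⟩, hη0⟩

theorem riedel_sahoo_flett (ψ ψ' : ℝ → ℝ) (a b : ℝ) (hab : a < b)
    (hc : ContinuousOn ψ (Set.Icc a b))
    (hd : ∀ x ∈ Set.Ioc a b, HasDerivAt ψ (ψ' x) x)
    (hkey : (b - a) * ψ' b = ψ a - ψ b) :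
    ∃ η ∈ Set.Ioo a b, ψ' η = 0 := by
  rcases lt_trichotomy (ψ b) (ψ a) with h | h | h
  · exact riedel_sahoo_aux ψ ψ' a b hab hc hd hkey h
  · obtain ⟨η, hη, hη0⟩ := exists_hasDerivAt_eq_zero hab hc h.symm
      (fun x hx => hd x ⟨hx.1, hx.2.le⟩)
    exact ⟨η, hη, hη0⟩
  · obtain ⟨η, hη, hη0⟩ := riedel_sahoo_aux (fun x => -ψ x) (fun x => -ψ' x) a b hab
      hc.neg (fun x hx => (hd x hx).neg) (by simp; linarith) (by simpa using h)
    exact ⟨η, hη, by simpa using hη0⟩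

open intervalIntegral in
/-- **Integral Riedel–Sahoo theorem.** If `f` is continuous on `[a,b]`, then there exists
`η ∈ (a,b)` with `f(η) = (1/(η-a)) ∫_a^η f(t) dt + ((η-a)/2)·(f(b)-f(a))/(b-a)`. -/
theorem integral_riedel_sahoo_theorem (f : ℝ → ℝ) (a b : ℝ) (hab : a < b)
    (hfc : ContinuousOn f (Set.Icc a b)) :
    ∃ η ∈ Set.Ioo a b,
      f η = (1 / (η - a)) * (∫ t in a..η, f t) + (η - a) / 2 * ((f b - f a) / (b - a)) := by
  have hba : (0:ℝ) < b - a := by linarith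
  -- extend f continuously to all of ℝ
  set g : ℝ → ℝ := Set.IccExtend hab.le ((Set.Icc a b).restrict f) with hg_def
  have hg : Continuous g := (continuousOn_iff_continuous_restrict.mp hfc).Icc_extend'
  have hgf : ∀ x ∈ Set.Icc a b, g x = f x := by
    intro x hx
    simp [hg_def, Set.IccExtend_of_mem hab.le _ hx]
    rfl
  set c : ℝ := (f b - f a) / (b - a) with hc_def
  set G : ℝ → ℝ := fun x => ∫ t in a..x, g t with hG_def
  have hG : ∀ x, HasDerivAt G (g x) x := fun x =>
    (hg.integral_hasStrictDerivAt a x).hasDerivAt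
  have hGa : G a = 0 := intervalIntegral.integral_same
  set ψ : ℝ → ℝ := fun x => (if x = a then f a else G x / (x - a)) - (x - a) * c / 2
    with hψ_def
  set ψ' : ℝ → ℝ := fun x => g x / (x - a) - G x / (x - a) ^ 2 - c / 2 with hψ'_def
  have hψa : ψ a = f a := by simp [hψ_def]
  -- derivative of ψ away from a
  have hd : ∀ x, x ≠ a → HasDerivAt ψ (ψ' x) x := by
    intro x hx
    have hxa : x - a ≠ 0 := sub_ne_zero.2 hx
    have h1 : HasDerivAt (fun y => G y / (y - a) - (y - a) * c / 2)
        ((g x * (x - a) - G x * 1) / (x - a) ^ 2 - 1 * c / 2) x := by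
      exact (((hG x).div (((hasDerivAt_id x).sub_const a)) hxa).sub
        ((((hasDerivAt_id x).sub_const a).mul_const c).div_const 2))
    have h2 : ψ =ᶠ[𝓝 x] fun y => G y / (y - a) - (y - a) * c / 2 := by
      filter_upwards [eventually_ne_nhds hx] with y hy
      simp [hψ_def, if_neg hy]
    have h3 := h1.congr_of_eventuallyEq h2
    refine h3.congr_deriv ?_
    rw [hψ'_def]
    field_simp
  -- continuity of ψ on [a,b]
  have hc : ContinuousOn ψ (Set.Icc a b) := by
    intro x hx
    rcases eq_or_ne x a with rfl | hxa
    · -- continuity at a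
      rw [← continuousWithinAt_diff_self]
      have hmono : 𝓝[Set.Icc x b \ {x}] x ≤ 𝓝[≠] x :=
        nhdsWithin_mono _ (fun y hy => hy.2)
      have hslope : Tendsto (slope G x) (𝓝[≠] x) (𝓝 (g x)) :=
        hasDerivAt_iff_tendsto_slope.mp (hG x)
      have hlin : Tendsto (fun y => (y - x) * c / 2) (𝓝[Set.Icc x b \ {x}] x) (𝓝 0) := by
        have : Tendsto (fun y : ℝ => (y - x) * c / 2) (𝓝 x) (𝓝 ((x - x) * c / 2)) :=
          (((continuous_id.sub continuous_const).mul continuous_const).div_const 2).tendsto x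
        simpa using this.mono_left nhdsWithin_le_nhds
      have hval : Tendsto ψ (𝓝[Set.Icc x b \ {x}] x) (𝓝 (g x - 0)) := by
        apply Tendsto.sub ?_ hlin
        apply Tendsto.congr' ?_ (hslope.mono_left hmono)
        filter_upwards [self_mem_nhdsWithin] with y hy
        have hyx : y ≠ x := fun h => hy.2 (by simp [h])
        simp [hψ_def, if_neg hyx, slope_def_field, hGa]
      have : g x = f x := hgf x hx
      unfold ContinuousWithinAt
      rw [hψa]
      simpa [this] using hval
    · exact ((hd x hxa).continuousAt).continuousWithinAt
  -- key identity
  have hgb : g b = f b := hgf b ⟨hab.le, le_rfl⟩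
  have hkey : (b - a) * ψ' b = ψ a - ψ b := by
    have hbne : b ≠ a := hab.ne'
    simp only [hψ'_def, hψ_def, if_neg hbne, hψa, hgb, hc_def, ↓reduceIte]
    field_simp [hc_def]
    ring
  obtain ⟨η, hη, hη0⟩ := riedel_sahoo_flett ψ ψ' a b hab hc
    (fun x hx => hd x (ne_of_gt hx.1)) hkey
  refine ⟨η, hη, ?_⟩
  have hηa : (0:ℝ) < η - a := by linarith [hη.1]
  have hgη : g η = f η := hgf η ⟨hη.1.le, hη.2.le⟩
  have hGη : G η = ∫ t in a..η, f t := by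
    apply intervalIntegral.integral_congr
    intro t ht
    rw [Set.uIcc_of_le hη.1.le] at ht
    exact hgf t ⟨ht.1, le_trans ht.2 hη.2.le⟩
  rw [← hGη, ← hgη]
  have h0 : g η / (η - a) - G η / (η - a) ^ 2 - c / 2 = 0 := hη0
  field_simp at h0 ⊢
  nlinarith [h0]
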